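/- For every integer n ≥ 3 and every integer t with 0 ≤ t ≤ 2^{n−3}, θ(n, 2^{n−1}, t) = 2·θ(n−2, t) + 2^{n−1}. In particular, θ(n, 2^{n−1}, 2^{n−3}) = (3/4)·2^n. -/

import Mathlib

open Finset

/-- Two vertices of the hypercube `Q_n` are adjacent iff they differ in exactly one
coordinate. -/
def cubeEdge {n : ℕ} (u v : Fin n → Bool) : Prop :=
  (Finset.univ.filter (fun i => u i ≠ v i)).card = 1

instance {n : ℕ} (u v : Fin n → Bool) : Decidable (cubeEdge u v) := by
  unfold cubeEdge; infer_instance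

/-- `θ(n,S)`: the number of edges of `Q_n` with exactly one endpoint in `S`. -/
def edgeBoundary (n : ℕ) (S : Finset (Fin n → Bool)) : ℕ :=
  (Finset.univ.filter (fun p : (Fin n → Bool) × (Fin n → Bool) =>
    p.1 ∈ S ∧ p.2 ∉ S ∧ cubeEdge p.1 p.2)).card

/-- `θ(n,k) = min {θ(n,S) : S ⊆ V(Q_n), |S| = k}`. -/
noncomputable def thetaMin (n k : ℕ) : ℕ :=
  sInf {m | ∃ S : Finset (Fin n → Bool), S.card = k ∧ edgeBoundary n S = m}

/-- The half plane `{x : x_i = a}` of `Q_n`. -/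
def halfPlane (n : ℕ) (i : Fin n) (a : Bool) : Finset (Fin n → Bool) :=
  Finset.univ.filter (fun x => x i = a)

/-- `Type(S) = min_H |S ∩ H|`, minimum over the `2n` half planes of `Q_n`. -/
noncomputable def typeOf (n : ℕ) (S : Finset (Fin n → Bool)) : ℕ :=
  sInf {m | ∃ (i : Fin n) (a : Bool), (S ∩ halfPlane n i a).card = m}

/-- `θ(n,k,t) = min {θ(n,S) : |S| = k, Type(S) = t}`. -/
noncomputable def thetaMinType (n k t : ℕ) : ℕ :=
  sInf {m | ∃ S : Finset (Fin n → Bool),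
    S.card = k ∧ typeOf n S = t ∧ edgeBoundary n S = m}

/-- Graph distance on the cycle `C_m` with vertices labelled by naturals. -/
def cycleDist (m a b : ℕ) : ℕ := min (Nat.dist a b) (m - Nat.dist a b)

/-- The wirelength of an embedding `η` of `Q_n` into the cycle `C_{2^n}`:
the sum of cycle distances over all (unordered) edges of `Q_n`.  (The sum over
ordered pairs counts every edge twice, whence the division by `2`.) -/
def wirelength (n : ℕ) (η : (Fin n → Bool) → ℕ) : ℕ :=
  ((Finset.univ.filter (fun p : (Fin n → Bool) × (Fin n → Bool) =>
    cubeEdge p.1 p.2)).sum (fun p => cycleDist (2^n) (η p.1) (η p.2))) / 2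

/-- The reflected Gray code embedding `ξ_n(x) = (y)_2 + 1`, where
`y_i = (x_1 + ⋯ + x_i) mod 2`. -/
def xi (n : ℕ) (x : Fin n → Bool) : ℕ :=
  (Finset.univ.sum (fun i : Fin n =>
    ((Finset.univ.filter (fun j : Fin n => j ≤ i ∧ x j = true)).card % 2)
      * 2 ^ (n - 1 - (i : ℕ)))) + 1

/-- `f(x) = 3/4 − (64/7)(x − 1/2)²`. -/
noncomputable def fGuu (x : ℝ) : ℝ := 3/4 - 64/7 * (x - 1/2)^2

/-- `takDelta i` is `Δ_{i+1}`: `Δ_1(x) = 1/2 − |x − 1/2|`,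
`Δ_{n}(x) = (1/2)Δ_{n−1}(2x − ⌊2x⌋)`. -/
noncomputable def takDelta : ℕ → ℝ → ℝ
  | 0, x => 1/2 - |x - 1/2|
  | n+1, x => takDelta n (2*x - (⌊2*x⌋ : ℝ)) / 2

/-- `m_n(x) = Σ_{i=1}^n Δ_i(x)`, the n-th partial sum of the Takagi function. -/
noncomputable def mTakagi (n : ℕ) (x : ℝ) : ℝ := ∑ i ∈ Finset.range n, takDelta i x

/-- `y_N = ⌈2^N/24⌉ / 2^N`. -/
noncomputable def yGuu (N : ℕ) : ℝ := (⌈(2^N : ℝ)/24⌉ : ℝ) / 2^N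

/-- `p_N = 1/2 − y_N`. -/
noncomputable def pGuu (N : ℕ) : ℝ := 1/2 - yGuu N

/-- `g_{n,i,a}^{-1}(S)`, where `g_{n,i,a}` inserts the letter `a` at position `i`. -/
def gPre (n : ℕ) (i : Fin (n+1)) (a : Bool) (S : Finset (Fin (n+1) → Bool)) :
    Finset (Fin n → Bool) :=
  Finset.univ.filter (fun x => i.insertNth a x ∈ S)



/-- binary weight -/
def bitw : ℕ → ℕ
  | 0 => 0
  | (n+1) => bitw ((n+1)/2) + (n+1) % 2
decreasing_by exact Nat.div_lt_self (Nat.succ_pos n) one_lt_two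

def Bsum (t : ℕ) : ℕ := ∑ i ∈ Finset.range t, bitw i

@[simp] lemma bitw_zero : bitw 0 = 0 := by simp [bitw]

lemma bitw_eq (n : ℕ) (hn : n ≠ 0) : bitw n = bitw (n/2) + n % 2 := by
  obtain ⟨m, rfl⟩ := Nat.exists_eq_succ_of_ne_zero hn
  conv_lhs => rw [bitw]

lemma bitw_pow_add (k i : ℕ) (h : i < 2^k) : bitw (2^k + i) = 1 + bitw i := by
  induction k generalizing i with
  | zero =>
    interval_cases i
    show bitw (2^0+0) = 1 + bitw 0
    rw [bitw_eq _ (by norm_num)]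
    simp
  | succ k ih =>
    have h2 : (2:ℕ)^(k+1) = 2 * 2^k := by ring
    have hne : 2^(k+1) + i ≠ 0 := by positivity
    rw [bitw_eq _ hne]
    have hdiv : (2^(k+1) + i) / 2 = 2^k + i/2 := by omega
    have hmod : (2^(k+1) + i) % 2 = i % 2 := by omega
    rw [hdiv, hmod, ih (i/2) (by omega)]
    rcases Nat.eq_zero_or_pos i with hi | hi
    · subst hi; simp
    · rw [bitw_eq i (by omega)]; ring

lemma bitw_pow (k : ℕ) : bitw (2^k) = 1 := by
  have := bitw_pow_add k 0 (by positivity)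
  simpa [bitw_zero] using this

@[simp] lemma Bsum_zero : Bsum 0 = 0 := rfl

lemma Bsum_succ (t : ℕ) : Bsum (t+1) = Bsum t + bitw t := Finset.sum_range_succ _ _

/-- F2 -/
lemma Bsum_pow_add (k x : ℕ) (h : x ≤ 2^k) : Bsum (2^k + x) = Bsum (2^k) + x + Bsum x := by
  induction x with
  | zero => simp
  | succ x ih =>
    rw [show 2^k + (x+1) = (2^k + x) + 1 from rfl, Bsum_succ, ih (by omega),
      bitw_pow_add k x (by omega), Bsum_succ]
    ring

/-- F3 -/
lemma Bsum_pow_succ (k : ℕ) : Bsum (2^(k+1)) = 2 * Bsum (2^k) + 2^k := by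
  have : (2:ℕ)^(k+1) = 2^k + 2^k := by ring
  rw [this, Bsum_pow_add k (2^k) le_rfl]; ring

/-- F4 -/
lemma Bsum_pow (k : ℕ) : 2 * Bsum (2^k) = k * 2^k := by
  induction k with
  | zero => simp [show (2:ℕ)^0 = 0+1 from rfl, Bsum_succ, Bsum]
  | succ k ih =>
    rw [Bsum_pow_succ k]
    have h1 : (k+1) * 2^(k+1) = 2*(k*2^k) + 2*2^k := by ring
    omega


lemma Bsum_one : Bsum 1 = 0 := by simp [Bsum]

lemma key (N : ℕ) :
    (∀ u v, v ≤ u → u + v ≤ N → Bsum u + Bsum v + v ≤ Bsum (u+v)) ∧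
    (∀ k a d c, 2^k ≤ N → a + d ≤ 2^k → d + c = 2^k →
      Bsum (a+d) + Bsum c ≤ Bsum a + Bsum (2^k)) := by
  induction N using Nat.strong_induction_on with
  | _ N ih =>
  -- superadditivity from part 1 of ih
  have super : ∀ x y, x + y ≤ N - 1 → Bsum x + Bsum y ≤ Bsum (x+y) := by
    intro x y hxy
    rcases Nat.eq_zero_or_pos N with rfl | hN
    · have hx : x = 0 := by omega
      have hy : y = 0 := by omega
      subst hx; subst hy; simp
    rcases le_total y x with h | h
    · have := ((ih (N-1) (by omega)).1 x y h (by omega)); omega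
    · have := ((ih (N-1) (by omega)).1 y x h (by omega))
      rw [add_comm y x] at this; omega
  constructor
  · intro u v huv hN
    rcases Nat.eq_zero_or_pos v with rfl | hv
    · simp
    have hu : u ≠ 0 := by omega
    set k := Nat.log 2 u with hk
    have h1 : 2^k ≤ u := Nat.pow_log_le_self 2 hu
    have h2 : u < 2^(k+1) := Nat.lt_pow_succ_log_self (by norm_num) u
    have hp : (2:ℕ)^(k+1) = 2^k + 2^k := by ring
    set u₁ := u - 2^k with hu₁
    have hu1 : u = 2^k + u₁ := by omega
    have hu1lt : u₁ < 2^k := by omega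
    have hBu : Bsum u = Bsum (2^k) + u₁ + Bsum u₁ := by
      rw [hu1]; exact Bsum_pow_add k u₁ (by omega)
    by_cases hA : u₁ + v ≤ 2^k
    · -- Case A
      have hsum : Bsum (u+v) = Bsum (2^k) + (u₁+v) + Bsum (u₁+v) := by
        rw [show u + v = 2^k + (u₁ + v) by omega]
        exact Bsum_pow_add k (u₁+v) hA
      have hsup : Bsum u₁ + Bsum v ≤ Bsum (u₁+v) := super u₁ v (by omega)
      omega
    · -- Case B
      push_neg at hA
      set w := u₁ + v - 2^k with hw
      have hwle : w ≤ 2^(k+1) := by omega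
      have hsum : Bsum (u+v) = (2 * Bsum (2^k) + 2^k) + w + Bsum w := by
        rw [show u + v = 2^(k+1) + w by omega, Bsum_pow_add (k+1) w hwle, Bsum_pow_succ k]
      have hstar : Bsum u₁ + Bsum v ≤ Bsum (2^k) + Bsum w := by
        by_cases hv2 : v ≤ 2^k
        · -- B1 : use K2 from ih
          have hK2 := (ih (N-1) (by omega)).2 k w (u₁ - w) v (by omega) (by omega) (by omega)
          rw [show w + (u₁ - w) = u₁ by omega] at hK2
          omega
        · -- B2
          push_neg at hv2
          set v₁ := v - 2^k with hv₁
          have hv1 : v = 2^k + v₁ := by omega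
          have hv1le : v₁ ≤ u₁ := by omega
          have hBv : Bsum v = Bsum (2^k) + v₁ + Bsum v₁ := by
            rw [hv1]; exact Bsum_pow_add k v₁ (by omega)
          have hK1 := (ih (N-1) (by omega)).1 u₁ v₁ hv1le (by omega)
          have hweq : w = u₁ + v₁ := by omega
          rw [hweq]
          omega
      omega
  · intro k a d c hkN had hdc
    induction k generalizing a d c with
    | zero =>
      have h1 : Bsum 1 = 0 := Bsum_one
      have hp0 : (2:ℕ)^0 = 1 := rfl
      rcases Nat.eq_zero_or_pos d with rfl | hd
      · have hc : c = 1 := by omega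
        subst hc; simp
      · have hd1 : d = 1 := by omega
        have ha0 : a = 0 := by omega
        have hc0 : c = 0 := by omega
        subst hd1; subst ha0; subst hc0; simp [h1, hp0]
    | succ j ihj =>
      have hp : (2:ℕ)^(j+1) = 2^j + 2^j := by ring
      have hBp : Bsum (2^(j+1)) = 2 * Bsum (2^j) + 2^j := Bsum_pow_succ j
      have hjN : 2^j ≤ N := by omega
      by_cases hi : a + d ≤ 2^j
      · -- case i
        have hd : d ≤ 2^j := by omega
        have hK := ihj a d (2^j - d) hjN hi (by omega)
        have hc : c = 2^j + (2^j - d) := by omega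
        have hBc : Bsum c = Bsum (2^j) + (2^j - d) + Bsum (2^j - d) := by
          rw [hc]; exact Bsum_pow_add j _ (by omega)
        omega
      · push_neg at hi
        by_cases hii : 2^j ≤ a
        · -- case ii
          set a₁ := a - 2^j with ha₁
          have ha1 : a = 2^j + a₁ := by omega
          have hd : d ≤ 2^j := by omega
          have hBa : Bsum a = Bsum (2^j) + a₁ + Bsum a₁ := by
            rw [ha1]; exact Bsum_pow_add j _ (by omega)
          have hBad : Bsum (a+d) = Bsum (2^j) + (a₁+d) + Bsum (a₁+d) := by
            rw [show a + d = 2^j + (a₁ + d) by omega]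
            exact Bsum_pow_add j _ (by omega)
          have hK := ihj a₁ d (2^j - d) hjN (by omega) (by omega)
          have hBc : Bsum c = Bsum (2^j) + (2^j - d) + Bsum (2^j - d) := by
            rw [show c = 2^j + (2^j - d) by omega]; exact Bsum_pow_add j _ (by omega)
          omega
        · push_neg at hii
          set e := a + d - 2^j with he
          have he2 : e ≤ 2^j := by omega
          have hBad : Bsum (a+d) = Bsum (2^j) + e + Bsum e := by
            rw [show a + d = 2^j + e by omega]; exact Bsum_pow_add j _ (by omega)
          by_cases hiii : d ≤ 2^j
          · -- iii-a
            have hBc : Bsum c = Bsum (2^j) + (2^j - d) + Bsum (2^j - d) := by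
              rw [show c = 2^j + (2^j - d) by omega]; exact Bsum_pow_add j _ (by omega)
            have h5 : e + (2^j - d) = a := by omega
            have hsup : Bsum e + Bsum (2^j - d) ≤ Bsum a := by
              have hs := super e (2^j - d) (by omega)
              rw [h5] at hs; exact hs
            omega
          · -- iii-b
            push_neg at hiii
            set f := d - 2^j with hf
            have hcf : c = 2^j - f := by omega
            have hK := ihj a f (2^j - f) hjN (by omega) (by omega)
            rw [show a + f = e by omega] at hK
            rw [hcf]
            omega

lemma Bsum_superadd_min (u v : ℕ) (h : v ≤ u) : Bsum u + Bsum v + v ≤ Bsum (u+v) :=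
  (key (u+v)).1 u v h le_rfl

section Cube

variable {n : ℕ}

lemma cubeEdge_symm {u v : Fin n → Bool} (h : cubeEdge u v) : cubeEdge v u := by
  unfold cubeEdge at *
  rw [show (univ.filter (fun i => v i ≠ u i)) = univ.filter (fun i => u i ≠ v i) by
    apply filter_congr; intro i _; simp [ne_comm]]
  exact h

lemma cubeEdge_insertNth (i : Fin (n+1)) (a b : Bool) (x y : Fin n → Bool) :
    cubeEdge (i.insertNth a x) (i.insertNth b y) ↔
      ((a = b ∧ cubeEdge x y) ∨ (¬ a = b ∧ x = y)) := by
  unfold cubeEdge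
  rw [Finset.card_filter]
  rw [Fin.sum_univ_succAbove
    (fun j => if (i.insertNth (α := fun _ => Bool) a x) j ≠ (i.insertNth (α := fun _ => Bool) b y) j then (1:ℕ) else 0) i]
  simp only [Fin.insertNth_apply_same, Fin.insertNth_apply_succAbove]
  rw [← Finset.card_filter]
  by_cases hab : a = b
  · subst hab; simp
  · have h1 : (if (a:Bool) ≠ b then (1:ℕ) else 0) = 1 := if_pos hab
    rw [h1]
    simp only [ne_eq, hab, not_false_eq_true, true_and, false_and, false_or]
    constructor
    · intro h
      have h0 : (univ.filter (fun k : Fin n => ¬ x k = y k)).card = 0 := by omega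
      rw [Finset.card_eq_zero, Finset.filter_eq_empty_iff] at h0
      funext k
      have := h0 (Finset.mem_univ k)
      simpa using this
    · intro h; subst h; simp
  
lemma sum_reindex_insertNth (i : Fin (n+1)) (f : (Fin (n+1) → Bool) → ℕ) :
    ∑ y : Fin (n+1) → Bool, f y
      = ∑ x : Fin n → Bool, f (i.insertNth false x) + ∑ x : Fin n → Bool, f (i.insertNth true x) := by
  rw [← Equiv.sum_comp (Fin.insertNthEquiv (fun _ => Bool) i) f, Fintype.sum_prod_type,
    Fintype.sum_bool]
  exact add_comm _ _

lemma card_sect (i : Fin (n+1)) (S : Finset (Fin (n+1) → Bool)) :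
    S.card = (gPre n i false S).card + (gPre n i true S).card := by
  have h : S.card = ∑ y : Fin (n+1) → Bool, if y ∈ S then 1 else 0 := by
    rw [← Finset.card_filter, Finset.filter_univ_mem]
  rw [h, sum_reindex_insertNth i, gPre, gPre, Finset.card_filter, Finset.card_filter]

lemma gPre_union (i : Fin (n+1)) (a : Bool) (S T : Finset (Fin (n+1) → Bool)) :
    gPre n i a (S ∪ T) = gPre n i a S ∪ gPre n i a T := by
  ext x; simp [gPre]

lemma gPre_inter (i : Fin (n+1)) (a : Bool) (S T : Finset (Fin (n+1) → Bool)) :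
    gPre n i a (S ∩ T) = gPre n i a S ∩ gPre n i a T := by
  ext x; simp [gPre]

lemma gPre_compl (i : Fin (n+1)) (a : Bool) (S : Finset (Fin (n+1) → Bool)) :
    gPre n i a (univ \ S) = univ \ gPre n i a S := by
  ext x; simp [gPre]

lemma gPre_card_eq_inter_halfPlane (i : Fin (n+1)) (a : Bool) (S : Finset (Fin (n+1) → Bool)) :
    (gPre n i a S).card = (S ∩ halfPlane (n+1) i a).card := by
  apply Finset.card_bij (fun x _ => i.insertNth (α := fun _ => Bool) a x)
  · intro x hx
    simp only [gPre, mem_filter, mem_univ, true_and] at hx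
    simp [Finset.mem_inter, hx, halfPlane]
  · intro x hx y hy hxy
    have := congrArg (fun z => i.removeNth z) hxy
    simpa using this
  · intro y hy
    simp only [Finset.mem_inter, halfPlane, mem_filter, mem_univ, true_and] at hy
    refine ⟨i.removeNth y, ?_, ?_⟩
    · simp only [gPre, mem_filter, mem_univ, true_and]
      rw [show a = y i from hy.2.symm, Fin.insertNth_self_removeNth]
      exact hy.1
    · rw [show a = y i from hy.2.symm, Fin.insertNth_self_removeNth]

lemma edgeBoundary_split (i : Fin (n+1)) (S : Finset (Fin (n+1) → Bool)) :
    edgeBoundary (n+1) S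
      = edgeBoundary n (gPre n i false S) + edgeBoundary n (gPre n i true S)
        + (gPre n i false S \ gPre n i true S).card
        + (gPre n i true S \ gPre n i false S).card := by
  classical
  set F := gPre n i false S with hF
  set T := gPre n i true S with hT
  have memF : ∀ x, x ∈ F ↔ i.insertNth false x ∈ S := by intro x; simp [hF, gPre]
  have memT : ∀ x, x ∈ T ↔ i.insertNth true x ∈ S := by intro x; simp [hT, gPre]
  rw [edgeBoundary, Finset.card_filter, Fintype.sum_prod_type]
  rw [sum_reindex_insertNth i (fun u => ∑ v : Fin (n+1) → Bool,
    if u ∈ S ∧ v ∉ S ∧ cubeEdge u v then 1 else 0)]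
  have inner : ∀ (a : Bool) (x : Fin n → Bool),
      (∑ v : Fin (n+1) → Bool, if i.insertNth a x ∈ S ∧ v ∉ S ∧ cubeEdge (i.insertNth a x) v then 1 else 0)
      = (∑ y : Fin n → Bool, if i.insertNth a x ∈ S ∧ i.insertNth false y ∉ S ∧ cubeEdge (i.insertNth a x) (i.insertNth false y) then 1 else 0)
        + (∑ y : Fin n → Bool, if i.insertNth a x ∈ S ∧ i.insertNth true y ∉ S ∧ cubeEdge (i.insertNth a x) (i.insertNth true y) then 1 else 0) := by
    intro a x
    exact sum_reindex_insertNth i _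
  simp only [inner]
  -- now four double sums
  have same : ∀ (a : Bool) (X : Finset (Fin n → Bool)),
      (∀ x, x ∈ X ↔ i.insertNth a x ∈ S) →
      (∑ x : Fin n → Bool, ∑ y : Fin n → Bool,
        if i.insertNth a x ∈ S ∧ i.insertNth a y ∉ S ∧ cubeEdge (i.insertNth a x) (i.insertNth a y) then 1 else 0)
      = edgeBoundary n X := by
    intro a X hX
    rw [edgeBoundary, Finset.card_filter, Fintype.sum_prod_type]
    apply Finset.sum_congr rfl; intro x _
    apply Finset.sum_congr rfl; intro y _
    congr 1
    rw [cubeEdge_insertNth]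
    simp [hX x, hX y]
  have cross : ∀ (a b : Bool) (X Y : Finset (Fin n → Bool)),
      (¬ a = b) →
      (∀ x, x ∈ X ↔ i.insertNth a x ∈ S) →
      (∀ x, x ∈ Y ↔ i.insertNth b x ∈ S) →
      (∑ x : Fin n → Bool, ∑ y : Fin n → Bool,
        if i.insertNth a x ∈ S ∧ i.insertNth b y ∉ S ∧ cubeEdge (i.insertNth a x) (i.insertNth b y) then 1 else 0)
      = (X \ Y).card := by
    intro a b X Y hab hX hY
    have hXY : (X \ Y).card = ∑ x : Fin n → Bool, if x ∈ X \ Y then 1 else 0 := by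
      rw [← Finset.card_filter]
      congr 1
      ext x
      simp
    rw [hXY]
    have : ∀ x : Fin n → Bool, (∑ y : Fin n → Bool,
        if i.insertNth a x ∈ S ∧ i.insertNth b y ∉ S ∧ cubeEdge (i.insertNth a x) (i.insertNth b y) then 1 else 0)
        = if x ∈ X \ Y then 1 else 0 := by
      intro x
      have hcong : ∀ y : Fin n → Bool,
          (if i.insertNth a x ∈ S ∧ i.insertNth b y ∉ S ∧ cubeEdge (i.insertNth a x) (i.insertNth b y) then 1 else 0)
          = if y = x then (if x ∈ X \ Y then 1 else 0) else 0 := by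
        intro y
        simp only [cubeEdge_insertNth]
        by_cases hxy : y = x
        · subst hxy
          simp only [Finset.mem_sdiff, hX, hY]
          by_cases h1 : i.insertNth a y ∈ S <;> by_cases h2 : i.insertNth b y ∈ S <;>
            simp [h1, h2, hab]
        · have : ¬ (i.insertNth a x ∈ S ∧ i.insertNth b y ∉ S ∧
              ((a = b ∧ cubeEdge x y) ∨ (¬ a = b ∧ x = y))) := by
            rintro ⟨-, -, (⟨h, -⟩ | ⟨-, h⟩)⟩
            · exact hab h
            · exact hxy h.symm
          simp [this, hxy]
      rw [Finset.sum_congr rfl (fun y _ => hcong y), Finset.sum_ite_eq' univ x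
        (fun _ => if x ∈ X \ Y then 1 else 0), if_pos (Finset.mem_univ x)]
    rw [Finset.sum_congr rfl (fun x _ => this x)]
  rw [Finset.sum_add_distrib, Finset.sum_add_distrib]
  rw [same false F memF, same true T memT, cross false true F T (by simp) memF memT,
    cross true false T F (by simp) memT memF]
  omega

lemma edgeBoundary_compl (S : Finset (Fin n → Bool)) :
    edgeBoundary n (univ \ S) = edgeBoundary n S := by
  unfold edgeBoundary
  apply Finset.card_bij' (fun p _ => Prod.swap p) (fun p _ => Prod.swap p)
  · intro p hp
    simp only [mem_filter, mem_univ, true_and, Finset.mem_sdiff, not_and, not_not] at hp ⊢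
    exact ⟨hp.2.1, hp.1, cubeEdge_symm hp.2.2⟩
  · intro p hp
    simp only [mem_filter, mem_univ, true_and, Finset.mem_sdiff, not_and, not_not] at hp ⊢
    exact ⟨hp.2.1, hp.1, cubeEdge_symm hp.2.2⟩
  · intro p _; rfl
  · intro p _; rfl

lemma edgeBoundary_submod (A B : Finset (Fin n → Bool)) :
    edgeBoundary n (A ∪ B) + edgeBoundary n (A ∩ B) ≤ edgeBoundary n A + edgeBoundary n B := by
  unfold edgeBoundary
  rw [Finset.card_filter, Finset.card_filter, Finset.card_filter, Finset.card_filter,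
    ← Finset.sum_add_distrib, ← Finset.sum_add_distrib]
  apply Finset.sum_le_sum
  intro p _
  by_cases hE : cubeEdge p.1 p.2 <;>
    by_cases h1 : p.1 ∈ A <;> by_cases h2 : p.1 ∈ B <;>
    by_cases h3 : p.2 ∈ A <;> by_cases h4 : p.2 ∈ B <;>
    simp [Finset.mem_union, Finset.mem_inter, h1, h2, h3, h4, hE]

lemma edgeBoundary_empty : edgeBoundary n (∅ : Finset (Fin n → Bool)) = 0 := by
  simp [edgeBoundary]

lemma edgeBoundary_univ : edgeBoundary n (univ : Finset (Fin n → Bool)) = 0 := by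
  simp [edgeBoundary]

end Cube

section Harper

lemma card_univ_cube (m : ℕ) : (univ : Finset (Fin m → Bool)).card = 2^m := by
  rw [Finset.card_univ]
  simp

lemma insertNth_inj {m : ℕ} (i : Fin (m+1)) (a b : Bool) (x y : Fin m → Bool)
    (h : i.insertNth (α := fun _ => Bool) a x = i.insertNth (α := fun _ => Bool) b y) :
    a = b ∧ x = y := by
  constructor
  · have := congrFun h i
    simpa using this
  · have := congrArg i.removeNth h
    simpa using this

/-- embed a set of `Q_m` into the half `x_i = a` of `Q_{m+1}` -/
def coneI {m : ℕ} (i : Fin (m+1)) (a : Bool) (S : Finset (Fin m → Bool)) :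
    Finset (Fin (m+1) → Bool) :=
  S.image (fun x => i.insertNth (α := fun _ => Bool) a x)

lemma gPre_coneI {m : ℕ} (i : Fin (m+1)) (a b : Bool) (S : Finset (Fin m → Bool)) :
    gPre m i b (coneI i a S) = if b = a then S else ∅ := by
  ext x
  simp only [gPre, coneI, mem_filter, mem_univ, true_and, Finset.mem_image]
  constructor
  · rintro ⟨y, hy, hxy⟩
    obtain ⟨hab, hxy'⟩ := insertNth_inj i a b y x hxy
    subst hab; subst hxy'
    simp [hy]
  · intro hx
    by_cases hba : b = a
    · subst hba
      rw [if_pos rfl] at hx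
      exact ⟨x, hx, rfl⟩
    · rw [if_neg hba] at hx
      simp at hx

lemma gPre_coneI_same {m : ℕ} (i : Fin (m+1)) (a : Bool) (S : Finset (Fin m → Bool)) :
    gPre m i a (coneI i a S) = S := by rw [gPre_coneI, if_pos rfl]

lemma gPre_coneI_ne {m : ℕ} (i : Fin (m+1)) (a b : Bool) (S : Finset (Fin m → Bool))
    (h : ¬ b = a) : gPre m i b (coneI i a S) = ∅ := by rw [gPre_coneI, if_neg h]

lemma harper : ∀ (m : ℕ) (S : Finset (Fin m → Bool)),
    (m : ℤ) * S.card ≤ edgeBoundary m S + 2 * Bsum S.card := by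
  intro m
  induction m with
  | zero => intro S; simp; positivity
  | succ m ih =>
    intro S
    set F := gPre m 0 false S with hF
    set T := gPre m 0 true S with hT
    have h1 : S.card = F.card + T.card := card_sect 0 S
    have h2 : edgeBoundary (m+1) S
        = edgeBoundary m F + edgeBoundary m T + (F \ T).card + (T \ F).card :=
      edgeBoundary_split 0 S
    have h3 : (F ∪ T).card + (F ∩ T).card = F.card + T.card :=
      Finset.card_union_add_card_inter F T
    have h4 : (F \ T).card + (F ∩ T).card = F.card := Finset.card_sdiff_add_card_inter F T
    have h5 : (T \ F).card + (T ∩ F).card = T.card := Finset.card_sdiff_add_card_inter T F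
    have h45 : (T ∩ F).card = (F ∩ T).card := by rw [Finset.inter_comm]
    have h6 : edgeBoundary m (F ∪ T) + edgeBoundary m (F ∩ T)
        ≤ edgeBoundary m F + edgeBoundary m T := edgeBoundary_submod F T
    have hvu : (F ∩ T).card ≤ (F ∪ T).card :=
      Finset.card_le_card (Finset.inter_subset_union)
    have hK : Bsum ((F ∪ T).card) + Bsum ((F ∩ T).card) + (F ∩ T).card
        ≤ Bsum ((F ∪ T).card + (F ∩ T).card) := Bsum_superadd_min _ _ hvu
    have hBS : Bsum ((F ∪ T).card + (F ∩ T).card) = Bsum S.card := by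
      congr 1; omega
    rw [hBS] at hK
    have ihu := ih (F ∪ T)
    have ihv := ih (F ∩ T)
    have hprod : ((m : ℤ) + 1) * S.card
        = (m : ℤ) * (F ∪ T).card + (m : ℤ) * (F ∩ T).card + (F ∪ T).card + (F ∩ T).card := by
      have hc : (S.card : ℤ) = ((F ∪ T).card : ℤ) + ((F ∩ T).card : ℤ) := by
        push_cast; omega
      rw [mul_comm, mul_comm ((m:ℤ)) ((F ∪ T).card : ℤ), mul_comm ((m:ℤ)) ((F ∩ T).card : ℤ)]
      rw [hc]; ring
    push_cast
    push_cast at ihu ihv hK h6 h2 hprod h1 h3 h4 h5 h45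
    linarith

lemma exists_opt : ∀ (m t : ℕ), t ≤ 2^m →
    ∃ S : Finset (Fin m → Bool), S.card = t ∧
      (edgeBoundary m S : ℤ) + 2 * Bsum t = m * t := by
  intro m
  induction m with
  | zero =>
    intro t ht
    interval_cases t
    · exact ⟨∅, by simp, by simp [edgeBoundary_empty]⟩
    · refine ⟨univ, ?_, ?_⟩
      · rw [card_univ_cube]; norm_num
      · rw [edgeBoundary_univ, Bsum_one]
        simp
  | succ m ih =>
    intro t ht
    by_cases hcase : t ≤ 2^m
    · obtain ⟨S', hc, hv⟩ := ih t hcase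
      refine ⟨coneI 0 false S', ?_, ?_⟩
      · rw [card_sect 0, gPre_coneI_same, gPre_coneI_ne _ _ _ _ (by simp)]
        simp [hc]
      · rw [edgeBoundary_split 0, gPre_coneI_same, gPre_coneI_ne _ _ _ _ (by simp)]
        rw [edgeBoundary_empty, Finset.sdiff_empty, Finset.empty_sdiff, Finset.card_empty, hc]
        push_cast
        push_cast at hv
        linarith
    · push_neg at hcase
      set r := t - 2^m with hr
      have hrle : r ≤ 2^m := by
        have : (2:ℕ)^(m+1) = 2^m + 2^m := by ring
        omega
      obtain ⟨S', hc, hv⟩ := ih r hrle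
      refine ⟨coneI 0 false univ ∪ coneI 0 true S', ?_, ?_⟩
      · rw [card_sect 0, gPre_union, gPre_union, gPre_coneI_same, gPre_coneI_same,
          gPre_coneI_ne _ _ _ _ (by simp), gPre_coneI_ne _ _ _ _ (by simp)]
        rw [Finset.union_empty, Finset.empty_union, card_univ_cube, hc]
        omega
      · rw [edgeBoundary_split 0, gPre_union, gPre_union, gPre_coneI_same, gPre_coneI_same,
          gPre_coneI_ne _ _ _ _ (by simp), gPre_coneI_ne _ _ _ _ (by simp)]
        rw [Finset.union_empty, Finset.empty_union, edgeBoundary_univ]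
        have hsd1 : (univ \ S').card + S'.card = 2^m := by
          rw [Finset.card_sdiff_add_card_eq_card (Finset.subset_univ S'), card_univ_cube]
        have hsd2 : (S' \ univ).card = 0 := by simp
        have hBt : Bsum t = Bsum (2^m) + r + Bsum r := by
          rw [show t = 2^m + r by omega]
          exact Bsum_pow_add m r hrle
        have hB4 : 2 * Bsum (2^m) = m * 2^m := Bsum_pow m
        have hexp : ((m:ℤ) + 1) * t = m * r + 2^m + r + m * 2^m := by
          have htN : t = 2^m + r := by omega
          have htZ : (t : ℤ) = 2^m + (r:ℤ) := by rw [htN]; push_cast; ring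
          rw [htZ]; ring
        push_cast
        push_cast at hv hexp hBt hB4 hsd1
        linarith

lemma thetaMin_val (m t : ℕ) (h : t ≤ 2^m) :
    (thetaMin m t : ℤ) + 2 * Bsum t = m * t := by
  obtain ⟨S₀, hc₀, hv₀⟩ := exists_opt m t h
  have hne : {x | ∃ S : Finset (Fin m → Bool), S.card = t ∧ edgeBoundary m S = x}.Nonempty :=
    ⟨edgeBoundary m S₀, S₀, hc₀, rfl⟩
  have hmem := Nat.sInf_mem hne
  obtain ⟨S₁, hc₁, hv₁⟩ := hmem
  have hle : thetaMin m t ≤ edgeBoundary m S₀ := Nat.sInf_le ⟨S₀, hc₀, rfl⟩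
  have hlow := harper m S₁
  have hv₁' : edgeBoundary m S₁ = thetaMin m t := hv₁
  rw [hc₁, hv₁'] at hlow
  have hleZ : (thetaMin m t : ℤ) ≤ edgeBoundary m S₀ := by exact_mod_cast hle
  omega

end Harper

section Constr

lemma gPre_halfPlane_zero (n : ℕ) (a b : Bool) :
    gPre n 0 a (halfPlane (n+1) 0 b) = if a = b then univ else ∅ := by
  ext x
  simp only [gPre, halfPlane, mem_filter, mem_univ, true_and, Fin.insertNth_apply_same]
  by_cases h : a = b <;> simp [h]

lemma gPre_halfPlane_succ (n : ℕ) (j : Fin n) (a b : Bool) :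
    gPre n 0 a (halfPlane (n+1) j.succ b) = halfPlane n j b := by
  ext x
  simp only [gPre, halfPlane, mem_filter, mem_univ, true_and, Fin.insertNth_zero',
    Fin.cons_succ]

lemma card_halfPlane (n : ℕ) (i : Fin (n+1)) (b : Bool) :
    (halfPlane (n+1) i b).card = 2^n := by
  have h := gPre_card_eq_inter_halfPlane i b (halfPlane (n+1) i b)
  rw [Finset.inter_self] at h
  rw [← h]
  have : gPre n i b (halfPlane (n+1) i b) = univ := by
    ext x
    simp [gPre, halfPlane, Fin.insertNth_apply_same]
  rw [this, card_univ_cube]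

lemma card_coneI {m : ℕ} (i : Fin (m+1)) (a : Bool) (X : Finset (Fin m → Bool)) :
    (coneI i a X).card = X.card := by
  rw [card_sect i (coneI i a X), gPre_coneI, gPre_coneI]
  cases a <;> simp

lemma theta_coneI {m : ℕ} (i : Fin (m+1)) (a : Bool) (X : Finset (Fin m → Bool)) :
    edgeBoundary (m+1) (coneI i a X) = edgeBoundary m X + X.card := by
  rw [edgeBoundary_split i, gPre_coneI, gPre_coneI]
  cases a <;> simp [edgeBoundary_empty]

/-- The optimal configuration. -/
lemma construction (M t : ℕ) (ht : t ≤ 2^M) (T : Finset (Fin (M+1) → Bool)) (hT : T.card = t) :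
    ∃ S : Finset (Fin (M+3) → Bool), S.card = 2^(M+2) ∧ typeOf (M+3) S = t ∧
      edgeBoundary (M+3) S = 2 * edgeBoundary (M+1) T + 2^(M+2) := by
  set S0 : Finset (Fin (M+2) → Bool) := coneI 0 true T with hS0
  set S1 : Finset (Fin (M+2) → Bool) := univ \ coneI 0 false T with hS1
  set S : Finset (Fin (M+3) → Bool) := coneI 0 false S0 ∪ coneI 0 true S1 with hS
  have hsecf : gPre (M+2) 0 false S = S0 := by
    rw [hS, gPre_union, gPre_coneI_same, gPre_coneI_ne _ _ _ _ (by simp), Finset.union_empty]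
  have hsect : gPre (M+2) 0 true S = S1 := by
    rw [hS, gPre_union, gPre_coneI_same, gPre_coneI_ne _ _ _ _ (by simp), Finset.empty_union]
  have hS0c : S0.card = t := by rw [hS0, card_coneI, hT]
  have hconec : (coneI (0 : Fin (M+2)) false T).card = t := by rw [card_coneI, hT]
  have hS1c : S1.card + t = 2^(M+2) := by
    rw [hS1, ← hconec]
    rw [Finset.card_sdiff_add_card_eq_card (Finset.subset_univ _), card_univ_cube]
  have h2M : 4 * 2^M = 2^(M+2) := by ring
  have h2M1 : 2 * 2^M = 2^(M+1) := by ring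
  have hScard : S.card = 2^(M+2) := by
    rw [card_sect 0 S, hsecf, hsect]
    omega
  -- S0 ⊆ S1
  have hsub : S0 ⊆ S1 := by
    intro x hx
    rw [hS1, Finset.mem_sdiff]
    refine ⟨Finset.mem_univ _, ?_⟩
    intro hx'
    rw [hS0, coneI, Finset.mem_image] at hx
    rw [coneI, Finset.mem_image] at hx'
    obtain ⟨y, -, hy⟩ := hx
    obtain ⟨z, -, hz⟩ := hx'
    have : (true : Bool) = false ∧ y = z := insertNth_inj 0 true false y z (by rw [hy, hz])
    simp at this
  -- boundary
  have hθS0 : edgeBoundary (M+2) S0 = edgeBoundary (M+1) T + t := by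
    rw [hS0, theta_coneI, hT]
  have hθS1 : edgeBoundary (M+2) S1 = edgeBoundary (M+1) T + t := by
    rw [hS1, edgeBoundary_compl, theta_coneI, hT]
  have hsd1 : (S0 \ S1).card = 0 := by
    rw [Finset.card_eq_zero, Finset.sdiff_eq_empty_iff_subset]
    exact hsub
  have hsd2 : (S1 \ S0).card + S0.card = S1.card := Finset.card_sdiff_add_card_eq_card hsub
  have hθS : edgeBoundary (M+3) S = 2 * edgeBoundary (M+1) T + 2^(M+2) := by
    rw [edgeBoundary_split 0 S, hsecf, hsect, hθS0, hθS1]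
    omega
  -- typeOf
  have hkey : ∀ (k : Fin (M+3)) (b : Bool),
      (S ∩ halfPlane (M+3) k b).card
        = (S0 ∩ gPre (M+2) 0 false (halfPlane (M+3) k b)).card
          + (S1 ∩ gPre (M+2) 0 true (halfPlane (M+3) k b)).card := by
    intro k b
    rw [card_sect 0 (S ∩ halfPlane (M+3) k b), gPre_inter, gPre_inter, hsecf, hsect]
  have hkey2 : ∀ (j : Fin (M+2)) (b : Bool) (X : Finset (Fin (M+2) → Bool)),
      (X ∩ halfPlane (M+2) j b).card
        = (gPre (M+1) 0 false X ∩ gPre (M+1) 0 false (halfPlane (M+2) j b)).card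
          + (gPre (M+1) 0 true X ∩ gPre (M+1) 0 true (halfPlane (M+2) j b)).card := by
    intro j b X
    rw [card_sect 0 (X ∩ halfPlane (M+2) j b), gPre_inter, gPre_inter]
  -- sections of S0 and S1
  have hS0f : gPre (M+1) 0 false S0 = ∅ := by
    rw [hS0]; exact gPre_coneI_ne _ _ _ _ (by simp)
  have hS0t : gPre (M+1) 0 true S0 = T := by rw [hS0]; exact gPre_coneI_same _ _ _
  have hS1f : gPre (M+1) 0 false S1 = univ \ T := by
    rw [hS1, gPre_compl, gPre_coneI_same]
  have hS1t : gPre (M+1) 0 true S1 = univ := by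
    rw [hS1, gPre_compl, gPre_coneI_ne _ _ _ _ (by simp), Finset.sdiff_empty]
  -- all half plane intersections are ≥ t, with value t attained
  have hattain : (S ∩ halfPlane (M+3) 0 false).card = t := by
    rw [hkey, gPre_halfPlane_zero, gPre_halfPlane_zero, if_pos rfl, if_neg (by simp),
      Finset.inter_univ, Finset.inter_empty, Finset.card_empty, hS0c]
    omega
  have hbig : ∀ (k : Fin (M+3)) (b : Bool), t ≤ (S ∩ halfPlane (M+3) k b).card := by
    intro k b
    cases k using Fin.cases with
    | zero =>
      rw [hkey, gPre_halfPlane_zero, gPre_halfPlane_zero]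
      cases b
      · rw [if_pos rfl, if_neg (by simp), Finset.inter_univ, Finset.inter_empty,
          Finset.card_empty, hS0c]
        omega
      · rw [if_neg (by simp), if_pos rfl, Finset.inter_univ, Finset.inter_empty,
          Finset.card_empty]
        omega
    | succ j =>
      rw [hkey, gPre_halfPlane_succ, gPre_halfPlane_succ]
      cases j using Fin.cases with
      | zero =>
        rw [hkey2, hkey2, hS0f, hS0t, hS1f, hS1t, gPre_halfPlane_zero, gPre_halfPlane_zero]
        have hTU : (univ \ T).card + t = 2^(M+1) := by
          rw [← hT, Finset.card_sdiff_add_card_eq_card (Finset.subset_univ _), card_univ_cube]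
        cases b
        · simp only [eq_self_iff_true, if_true, if_neg (show ¬ (true = false) by simp),
            Finset.empty_inter, Finset.inter_empty, Finset.inter_univ, Finset.card_empty]
          omega
        · simp only [eq_self_iff_true, if_true, if_neg (show ¬ (false = true) by simp),
            Finset.empty_inter, Finset.inter_empty, Finset.inter_univ, Finset.card_empty,
            card_univ_cube]
          omega
      | succ l =>
        rw [hkey2, hkey2, hS0f, hS0t, hS1f, hS1t, gPre_halfPlane_succ, gPre_halfPlane_succ]
        simp only [Finset.empty_inter, Finset.card_empty, Finset.univ_inter]
        have e1 : (univ \ T) ∩ halfPlane (M+1) l b = halfPlane (M+1) l b \ T := by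
          ext x; simp [Finset.mem_sdiff, and_comm]
        have e2 : (halfPlane (M+1) l b \ T).card + (halfPlane (M+1) l b ∩ T).card
            = (halfPlane (M+1) l b).card := Finset.card_sdiff_add_card_inter _ _
        have e3 : (T ∩ halfPlane (M+1) l b).card = (halfPlane (M+1) l b ∩ T).card := by
          rw [Finset.inter_comm]
        have e4 : (halfPlane (M+1) l b).card = 2^M := card_halfPlane M l b
        rw [e1]
        omega
  have htype : typeOf (M+3) S = t := by
    apply le_antisymm
    · exact Nat.sInf_le ⟨0, false, hattain⟩
    · have hne : {m | ∃ (i : Fin (M+3)) (a : Bool), (S ∩ halfPlane (M+3) i a).card = m}.Nonempty :=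
        ⟨t, 0, false, hattain⟩
      obtain ⟨k, b, hv⟩ := Nat.sInf_mem hne
      calc t ≤ (S ∩ halfPlane (M+3) k b).card := hbig k b
        _ = _ := hv
  exact ⟨S, hScard, htype, hθS⟩

end Constr

section Main

lemma lower2 (M t : ℕ) (ht : t ≤ 2^M) (A B : Finset (Fin (M+2) → Bool))
    (hA : A.card = t) (hAB : A.card + B.card = 2^(M+2)) :
    2 * thetaMin (M+1) t + 2^(M+2) ≤ edgeBoundary (M+2) A + edgeBoundary (M+2) B
      + (A \ B).card + (B \ A).card := by
  have h21 : (2:ℕ)^(M+1) = 2 * 2^M := by ring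
  have h22 : (2:ℕ)^(M+2) = 4 * 2^M := by ring
  have htM1 : t ≤ 2^(M+1) := by omega
  have hθA := harper (M+2) A
  rw [hA] at hθA
  have hBc : (univ \ B).card = t := by
    have h := Finset.card_sdiff_add_card_eq_card (Finset.subset_univ B)
    rw [card_univ_cube] at h
    omega
  have hθB := harper (M+2) (univ \ B)
  rw [edgeBoundary_compl, hBc] at hθB
  have hcross : B.card ≤ A.card + (B \ A).card := by
    calc B.card ≤ (A ∪ (B \ A)).card := Finset.card_le_card (fun x hx => by
            by_cases h : x ∈ A <;> simp [Finset.mem_union, Finset.mem_sdiff, h, hx])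
      _ ≤ A.card + (B \ A).card := Finset.card_union_le _ _
  have hval := thetaMin_val (M+1) t htM1
  have hexp : ((M:ℤ)+2) * t = ((M:ℤ)+1) * t + t := by ring
  zify
  push_cast at hθA hθB hval hcross hAB hA hBc ⊢
  linarith

lemma lower (M t : ℕ) (ht : t ≤ 2^M) (S : Finset (Fin (M+3) → Bool))
    (hcard : S.card = 2^(M+2)) (htype : typeOf (M+3) S = t) :
    2 * thetaMin (M+1) t + 2^(M+2) ≤ edgeBoundary (M+3) S := by
  have hne : {m | ∃ (i : Fin (M+3)) (a : Bool),
      (S ∩ halfPlane (M+3) i a).card = m}.Nonempty :=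
    ⟨_, 0, false, rfl⟩
  have hmem' : ∃ (i : Fin (M+3)) (a : Bool), (S ∩ halfPlane (M+3) i a).card = t := by
    rw [← htype]
    exact Nat.sInf_mem hne
  obtain ⟨k, b, hkb⟩ := hmem'
  have hsec : (gPre (M+2) k b S).card = t := by
    rw [gPre_card_eq_inter_halfPlane]; exact hkb
  have hsplit : edgeBoundary (M+3) S
      = edgeBoundary (M+2) (gPre (M+2) k false S) + edgeBoundary (M+2) (gPre (M+2) k true S)
        + (gPre (M+2) k false S \ gPre (M+2) k true S).card
        + (gPre (M+2) k true S \ gPre (M+2) k false S).card := edgeBoundary_split k S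
  have hsum := card_sect k S
  cases b
  · have hAB : (gPre (M+2) k false S).card + (gPre (M+2) k true S).card = 2^(M+2) := by omega
    have := lower2 M t ht (gPre (M+2) k false S) (gPre (M+2) k true S) hsec hAB
    omega
  · have hAB : (gPre (M+2) k true S).card + (gPre (M+2) k false S).card = 2^(M+2) := by omega
    have := lower2 M t ht (gPre (M+2) k true S) (gPre (M+2) k false S) hsec hAB
    omega

theorem thetaMinType_half_small_type' (n : ℕ) (hn : 3 ≤ n) :
    (∀ t : ℕ, t ≤ 2^(n-3) →
      thetaMinType n (2^(n-1)) t = 2 * thetaMin (n-2) t + 2^(n-1)) ∧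
    (thetaMinType n (2^(n-1)) (2^(n-3)) : ℝ) = (3/4) * 2^n := by
  obtain ⟨M, rfl⟩ : ∃ M, n = M + 3 := ⟨n - 3, by omega⟩
  have e1 : M + 3 - 1 = M + 2 := by omega
  have e2 : M + 3 - 2 = M + 1 := by omega
  have e3 : M + 3 - 3 = M := by omega
  rw [e1, e2, e3]
  have h21 : (2:ℕ)^(M+1) = 2 * 2^M := by ring
  have main : ∀ t : ℕ, t ≤ 2^M →
      thetaMinType (M+3) (2^(M+2)) t = 2 * thetaMin (M+1) t + 2^(M+2) := by
    intro t ht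
    obtain ⟨S₀, hc₀, hv₀⟩ := exists_opt (M+1) t (by omega)
    have hne : {x | ∃ S : Finset (Fin (M+1) → Bool),
        S.card = t ∧ edgeBoundary (M+1) S = x}.Nonempty := ⟨_, S₀, hc₀, rfl⟩
    obtain ⟨T, hTc, hTv⟩ := Nat.sInf_mem hne
    have hTv' : edgeBoundary (M+1) T = thetaMin (M+1) t := hTv
    obtain ⟨S, hScard, hStype, hSθ⟩ := construction M t ht T hTc
    apply le_antisymm
    · exact Nat.sInf_le ⟨S, hScard, hStype, by rw [hSθ, hTv']⟩
    · have hne2 : {x | ∃ S' : Finset (Fin (M+3) → Bool),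
          S'.card = 2^(M+2) ∧ typeOf (M+3) S' = t ∧ edgeBoundary (M+3) S' = x}.Nonempty :=
        ⟨_, S, hScard, hStype, rfl⟩
      obtain ⟨S', hc', hty', hv'⟩ := Nat.sInf_mem hne2
      have hlow := lower M t ht S' hc' hty'
      have hv'' : edgeBoundary (M+3) S' = thetaMinType (M+3) (2^(M+2)) t := hv'
      omega
  refine ⟨main, ?_⟩
  have h := main (2^M) le_rfl
  have hval := thetaMin_val (M+1) (2^M) (by omega)
  have hB : 2 * Bsum (2^M) = M * 2^M := Bsum_pow M
  have hmin : thetaMin (M+1) (2^M) = 2^M := by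
    have hZ : (thetaMin (M+1) (2^M) : ℤ) = 2^M := by
      push_cast at hval
      have hBZ : 2 * (Bsum (2^M) : ℤ) = M * 2^M := by exact_mod_cast hB
      have hexp : ((M:ℤ)+1) * 2^M = M * 2^M + 2^M := by ring
      linarith
    exact_mod_cast hZ
  rw [h, hmin]
  push_cast
  rw [show (2:ℝ)^(M+2) = 4 * 2^M by ring, show (2:ℝ)^(M+3) = 8 * 2^M by ring]
  ring

end Main

/-- For `n ≥ 3` and `0 ≤ t ≤ 2^{n−3}`,
`θ(n, 2^{n−1}, t) = 2θ(n−2,t) + 2^{n−1}`; in particular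
`θ(n, 2^{n−1}, 2^{n−3}) = (3/4)·2^n`. -/
theorem thetaMinType_half_small_type (n : ℕ) (hn : 3 ≤ n) :
    (∀ t : ℕ, t ≤ 2^(n-3) →
      thetaMinType n (2^(n-1)) t = 2 * thetaMin (n-2) t + 2^(n-1)) ∧
    (thetaMinType n (2^(n-1)) (2^(n-3)) : ℝ) = (3/4) * 2^n := by
  exact thetaMinType_half_small_type' n hn
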